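/- arXiv:2103.16394 — 6 statements merged into one kernel-verified Lean document; each statement's English description precedes it below -/
import Mathlib

section
/- Let B be a strict 2-category (a bicategory whose associators and unitors are identities), let c be an object of B, and for every object a of B fix a 1-cell f_a : a ⟶ c. Then the following are equivalent: (1) there exists a contraction γ on B with center c such that γ_a = f_a for every object a; (2) f_c = 𝟙 c and, for every object a, the 1-cell f_a is a terminal object of the hom-category B(a, c). -/
open CategoryTheory CategoryTheory.Limits

universe w v u

/-- A contraction on a strict 2-category `B` with center `c`:
1-cells `obj a : a ⟶ c` with `obj c = 𝟙 c`, and 2-cells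
`app f : f ≫ obj b ⟶ obj a` for every 1-cell `f : a ⟶ b`, subject to the
identity, composition, 2-cell and normality laws. -/
structure Contraction (B : Type u) [Bicategory.{w, v} B] [Bicategory.Strict B] (c : B) where
  obj : ∀ a : B, a ⟶ c
  obj_center : obj c = 𝟙 c
  app : ∀ {a b : B} (f : a ⟶ b), f ≫ obj b ⟶ obj a
  app_id : ∀ a : B, app (𝟙 a) = eqToHom (by simp)
  app_comp : ∀ {a b b' : B} (f : a ⟶ b) (g : b ⟶ b'),
    app (f ≫ g) = eqToHom (by simp) ≫ Bicategory.whiskerLeft f (app g) ≫ app f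
  app_naturality : ∀ {a b : B} {f g : a ⟶ b} (θ : f ⟶ g),
    app f = Bicategory.whiskerRight θ (obj b) ≫ app g
  app_norm : ∀ a : B, app (obj a) = eqToHom (by rw [obj_center]; simp)

private lemma contraction_aux {B : Type u} [Bicategory.{w, v} B] [Bicategory.Strict B]
    {a c : B} {x y z : a ⟶ c} (θ' : x ⟶ y) (hz : y = z) (k : c ⟶ c) (hk : k = 𝟙 c)
    (p : x = x ≫ k) (q : y ≫ k = z) :
    eqToHom p ≫ Bicategory.whiskerRight θ' k ≫ eqToHom q = θ' ≫ eqToHom hz := by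
  subst hz hk
  simp [Bicategory.Strict.rightUnitor_eqToIso]

/-- A choice of 1-cells `f a : a ⟶ c` extends to a contraction with center `c`
if and only if `f c = 𝟙 c` and each `f a` is terminal in the hom-category `B(a, c)`. -/
theorem contraction_exists_iff_terminal {B : Type u} [Bicategory.{w, v} B]
    [Bicategory.Strict B] (c : B) (f : ∀ a : B, a ⟶ c) :
    (∃ γ : Contraction B c, ∀ a : B, γ.obj a = f a) ↔
      (f c = 𝟙 c ∧ ∀ a : B, Nonempty (IsTerminal (f a))) := by
  constructor
  · rintro ⟨γ, hγ⟩
    have hc : f c = 𝟙 c := by rw [← hγ c, γ.obj_center]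
    refine ⟨hc, fun a => ⟨IsTerminal.ofUniqueHom
      (fun g => eqToHom (by rw [hγ c, hc]; simp) ≫ γ.app g ≫ eqToHom (hγ a)) ?_⟩⟩
    intro g θ
    have h1 := γ.app_naturality (θ ≫ eqToHom (hγ a).symm)
    have h2 := γ.app_norm a
    rw [h2] at h1
    rw [h1]
    simp only [Category.assoc, eqToHom_trans]
    rw [contraction_aux (θ ≫ eqToHom (hγ a).symm) (hγ a) (γ.obj c) γ.obj_center]
    simp
  · rintro ⟨hc, ht⟩
    have T : ∀ a : B, IsTerminal (f a) := fun a => (ht a).some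
    refine ⟨⟨f, hc, fun {a b} g => (T a).from _, ?_, ?_, ?_, ?_⟩, fun a => rfl⟩
    · intro a; exact (T a).hom_ext _ _
    · intros; exact (T _).hom_ext _ _
    · intros; exact (T _).hom_ext _ _
    · intro a; exact (T a).hom_ext _ _
end

section
/- Let B be a strict 2-category and let γ be a contraction on B with center c. Then for every object a of B, the 1-cell γ_a : a ⟶ c is a terminal object of the hom-category B(a, c). In particular, every hom-category B(a, c) has a terminal object, i.e., c is quasi-terminal. -/
open CategoryTheory CategoryTheory.Limits

universe w v u

private lemma whiskerRight_congr {B : Type u} [Bicategory.{w, v} B] {a b b' : B}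
    {f g : a ⟶ b} (θ : f ⟶ g) {h h' : b ⟶ b'} (e : h = h') :
    Bicategory.whiskerRight θ h =
      eqToHom (by rw [e]) ≫ Bicategory.whiskerRight θ h' ≫ eqToHom (by rw [e]) := by
  subst e; simp

/-- For every contraction `γ` with center `c` and every object `a`, the 1-cell
`γ.obj a` is terminal in the hom-category `B(a, c)`; in particular `c` is
quasi-terminal. -/
theorem contraction_obj_isTerminal {B : Type u} [Bicategory.{w, v} B]
    [Bicategory.Strict B] {c : B} (γ : Contraction B c) :
    (∀ a : B, Nonempty (IsTerminal (γ.obj a))) ∧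
      (∀ a : B, ∃ t : a ⟶ c, Nonempty (IsTerminal t)) := by
  have key : ∀ a : B, IsTerminal (γ.obj a) := fun a => by
    refine IsTerminal.ofUniqueHom
      (fun f => eqToHom (by rw [γ.obj_center]; simp) ≫ γ.app f) ?_
    intro f θ
    have h := γ.app_naturality θ
    rw [γ.app_norm, whiskerRight_congr θ γ.obj_center] at h
    simp [Bicategory.Strict.rightUnitor_eqToIso] at h
    simp [h]
  exact ⟨fun a => ⟨key a⟩, fun a => ⟨γ.obj a, ⟨key a⟩⟩⟩
end

section
/- Let B be a strict 2-category, c an object, and let γ be data satisfying all the axioms of a contraction with center c except possibly normality: 1-cells γ_a : a ⟶ c with γ_c = 𝟙 c and 2-cells γ_f : f ≫ γ_b ⟶ γ_a satisfying the identity, composition and 2-cell laws. If for an object x the endo-2-cell γ_{γ_x} : γ_x ⟶ γ_x (using γ_c = 𝟙 c and strictness) is invertible, then γ_{γ_x} = 𝟙 (γ_x). -/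
open CategoryTheory CategoryTheory.Limits

universe w v u

/-- Data satisfying all the axioms of a contraction on a strict 2-category `B`
with center `c` except possibly normality. -/
structure PreContraction (B : Type u) [Bicategory.{w, v} B] [Bicategory.Strict B] (c : B) where
  obj : ∀ a : B, a ⟶ c
  obj_center : obj c = 𝟙 c
  app : ∀ {a b : B} (f : a ⟶ b), f ≫ obj b ⟶ obj a
  app_id : ∀ a : B, app (𝟙 a) = eqToHom (by simp)
  app_comp : ∀ {a b b' : B} (f : a ⟶ b) (g : b ⟶ b'),
    app (f ≫ g) = eqToHom (by simp) ≫ Bicategory.whiskerLeft f (app g) ≫ app f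
  app_naturality : ∀ {a b : B} {f g : a ⟶ b} (θ : f ⟶ g),
    app f = Bicategory.whiskerRight θ (obj b) ≫ app g

/-- For a 1-cell `h : x ⟶ c`, the 2-cell `γ_h : h ⟶ γ_x` obtained from `γ.app h`
using `γ.obj c = 𝟙 c` and strictness. -/
def PreContraction.app' {B : Type u} [Bicategory.{w, v} B] [Bicategory.Strict B] {c : B}
    (γ : PreContraction B c) {x : B} (h : x ⟶ c) : h ⟶ γ.obj x :=
  eqToHom (by rw [γ.obj_center]; simp) ≫ γ.app h

lemma wr_congr {B : Type u} [Bicategory.{w, v} B] {a b c : B} {f g : a ⟶ b}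
    {θ : f ⟶ g} {h h' : b ⟶ c} (eq : h = h') :
    Bicategory.whiskerRight θ h
      = eqToHom (by rw [eq]) ≫ Bicategory.whiskerRight θ h' ≫ eqToHom (by rw [eq]) := by
  subst eq; simp

/-- If the endo-2-cell `γ_{γ_x} : γ_x ⟶ γ_x` of a pre-contraction is invertible,
then it is the identity. -/
theorem preContraction_selfApp_eq_id {B : Type u} [Bicategory.{w, v} B]
    [Bicategory.Strict B] {c : B} (γ : PreContraction B c) (x : B)
    (h : IsIso (γ.app' (γ.obj x))) :
    γ.app' (γ.obj x) = 𝟙 (γ.obj x) := by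
  set e := γ.app' (γ.obj x) with he
  have hw : Bicategory.whiskerRight e (γ.obj c)
      = eqToHom (by rw [γ.obj_center]; simp) ≫ e ≫ eqToHom (by rw [γ.obj_center]; simp) := by
    have := wr_congr (θ := e) γ.obj_center
    rw [this]
    simp [Bicategory.Strict.rightUnitor_eqToIso]
  have key : e = e ≫ e := by
    conv_lhs => rw [he, PreContraction.app', γ.app_naturality e, hw]
    rw [he, PreContraction.app']
    simp
  rw [← cancel_epi e, ← key, Category.comp_id]
end

section
/- Let B be a strict 2-category with a marking M, let c be an object of B, and for every object a fix a marked 1-cell f_a ∈ M(a, c) such that f_c = 𝟙 c. Then c is M-final if and only if there exists an M-contraction γ on B with center c such that γ_a = f_a for every object a. -/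
open CategoryTheory CategoryTheory.Limits

universe w v u

/-- A marking on a 2-category: a collection of 1-cells containing all identities. -/
structure Marking (B : Type u) [Bicategory.{w, v} B] where
  marked : ∀ a b : B, Set (a ⟶ b)
  id_mem : ∀ a : B, 𝟙 a ∈ marked a a


/-- An object `c` is `M`-final if every hom-category `B(a, c)` has a terminal
object, `𝟙 c` is terminal in `B(c, c)`, every object admits a marked 1-cell to
`c`, and precomposition with marked 1-cells preserves terminal objects. -/
structure IsMFinal {B : Type u} [Bicategory.{w, v} B] [Bicategory.Strict B]
    (M : Marking B) (c : B) : Prop where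
  hom_has_terminal : ∀ a : B, ∃ t : a ⟶ c, Nonempty (IsTerminal t)
  id_terminal : Nonempty (IsTerminal (𝟙 c))
  exists_marked : ∀ a : B, ∃ f : a ⟶ c, f ∈ M.marked a c
  precomp_terminal : ∀ {a b : B} (f : a ⟶ b), f ∈ M.marked a b →
    ∀ g : b ⟶ c, Nonempty (IsTerminal g) → Nonempty (IsTerminal (f ≫ g))


/-- A contraction `γ` is an `M`-contraction if each `γ.obj a` is marked and
`γ.app f` is invertible for every marked 1-cell `f`. -/
def Contraction.IsMContraction {B : Type u} [Bicategory.{w, v} B] [Bicategory.Strict B]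
    {c : B} (M : Marking B) (γ : Contraction B c) : Prop :=
  (∀ a : B, γ.obj a ∈ M.marked a c) ∧
    (∀ {a b : B} (f : a ⟶ b), f ∈ M.marked a b → IsIso (γ.app f))

/-- Whiskering with a 1-cell equal to the identity is trivial (strict case). -/
lemma whiskerRight_eq_id_aux {B : Type u} [Bicategory.{w, v} B] [Bicategory.Strict B]
    {a c : B} {x y : a ⟶ c} (m : x ⟶ y) (k : c ⟶ c) (hk : k = 𝟙 c)
    (h1 : x = x ≫ k) (h2 : y ≫ k = y) :
    eqToHom h1 ≫ Bicategory.whiskerRight m k ≫ eqToHom h2 = m := by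
  subst hk
  simp [Bicategory.whiskerRight_id, Bicategory.Strict.rightUnitor_eqToIso]

/-- Given a choice of marked 1-cells `f a : a ⟶ c` with `f c = 𝟙 c`, the object
`c` is `M`-final if and only if there is an `M`-contraction `γ` with center `c`
such that `γ.obj a = f a` for every `a`. -/
theorem isMFinal_iff_exists_MContraction {B : Type u} [Bicategory.{w, v} B]
    [Bicategory.Strict B] (M : Marking B) (c : B) (f : ∀ a : B, a ⟶ c)
    (hf : ∀ a : B, f a ∈ M.marked a c) (hfc : f c = 𝟙 c) :
    IsMFinal M c ↔
      ∃ γ : Contraction B c, Contraction.IsMContraction M γ ∧ ∀ a : B, γ.obj a = f a := by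
  constructor
  · intro hfin
    have hT : ∀ a : B, IsTerminal (f a) := fun a =>
      (hfin.precomp_terminal (f a) (hf a) (𝟙 c) hfin.id_terminal).some.ofIso
        (eqToIso (by simp))
    refine ⟨{ obj := f, obj_center := hfc,
              app := fun {a b} g => (hT a).from _,
              app_id := fun a => (hT a).hom_ext _ _,
              app_comp := fun g h => (hT _).hom_ext _ _,
              app_naturality := fun θ => (hT _).hom_ext _ _,
              app_norm := fun a => (hT a).hom_ext _ _ }, ⟨hf, ?_⟩, fun a => rfl⟩
    intro a b g hg
    have h' := (hfin.precomp_terminal g hg (f b) ⟨hT b⟩).some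
    exact ⟨⟨h'.from (f a), h'.hom_ext _ _, (hT a).hom_ext _ _⟩⟩
  · rintro ⟨γ, ⟨hm, hinv⟩, hobj⟩
    have hT : ∀ a : B, IsTerminal (γ.obj a) := fun a =>
      IsTerminal.ofUniqueHom
        (fun g => eqToHom (show g = g ≫ γ.obj c by rw [γ.obj_center]; simp) ≫ γ.app g)
        (by
          intro g m
          have hnat := γ.app_naturality m
          rw [γ.app_norm a] at hnat
          show m = eqToHom _ ≫ γ.app g
          rw [hnat]
          exact (whiskerRight_eq_id_aux m (γ.obj c) γ.obj_center _ _).symm)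
    refine ⟨fun a => ⟨γ.obj a, ⟨hT a⟩⟩, ⟨(hT c).ofIso (eqToIso γ.obj_center)⟩,
      fun a => ⟨f a, hf a⟩, ?_⟩
    intro a b g hg t ⟨ht⟩
    have : IsIso (γ.app g) := hinv g hg
    exact ⟨(hT a).ofIso
      ((Bicategory.whiskerLeftIso g (ht.uniqueUpToIso (hT b)) ≪≫ asIso (γ.app g)).symm)⟩
end

section
/- Let B be a strict 2-category with a marking M that is closed under isomorphism of 1-cells (i.e., whenever f ∈ M(a, b) and f ≅ f′ in the hom-category B(a, b), also f′ ∈ M(a, b)). Let γ and ρ be two contractions on B with the same center c. Then γ is an M-contraction if and only if ρ is an M-contraction. -/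
open CategoryTheory CategoryTheory.Limits

universe w v u

section Aux

open Bicategory

variable {B : Type u} [Bicategory.{w, v} B] [Bicategory.Strict B] {c : B}

private lemma whiskerRight_eq_of_eq_id {a b : B} {f g : a ⟶ b} (θ : f ⟶ g)
    {h : b ⟶ b} (hh : h = 𝟙 b) :
    θ ▷ h = eqToHom (by rw [hh]; simp) ≫ θ ≫ eqToHom (by rw [hh]; simp) := by
  subst hh
  simp [Bicategory.whiskerRight_id, Bicategory.Strict.rightUnitor_eqToIso]

/-- The canonical comparison 2-cell between two contractions with the same center. -/
def Contraction.homTo (γ ρ : Contraction B c) (a : B) : γ.obj a ⟶ ρ.obj a :=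
  eqToHom (by rw [ρ.obj_center]; simp) ≫ ρ.app (γ.obj a)

lemma Contraction.homTo_comp (γ ρ : Contraction B c) (a : B) :
    γ.homTo ρ a ≫ ρ.homTo γ a = 𝟙 (γ.obj a) := by
  have h := γ.app_naturality (γ.homTo ρ a)
  rw [γ.app_norm, whiskerRight_eq_of_eq_id _ γ.obj_center] at h
  have h2 := congrArg (fun x => eqToHom
    (show γ.obj a = γ.obj a ≫ γ.obj c by rw [γ.obj_center]; simp) ≫ x) h
  simp only [eqToHom_trans_assoc, eqToHom_trans, eqToHom_refl, Category.id_comp,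
    Category.assoc] at h2
  simpa [Contraction.homTo] using h2.symm

instance (γ ρ : Contraction B c) (a : B) : IsIso (γ.homTo ρ a) :=
  ⟨ρ.homTo γ a, γ.homTo_comp ρ a, ρ.homTo_comp γ a⟩

instance (γ ρ : Contraction B c) (a : B) : IsIso (ρ.app (γ.obj a)) := by
  have : ρ.app (γ.obj a) = eqToHom (by rw [ρ.obj_center]; simp) ≫ γ.homTo ρ a := by
    simp [Contraction.homTo]
  rw [this]; infer_instance

end Aux

/-- If the marking `M` is closed under isomorphism of 1-cells, then for two
contractions `γ`, `ρ` with the same center `c`, `γ` is an `M`-contraction if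
and only if `ρ` is. -/
theorem isMContraction_iff_of_closed_under_iso {B : Type u} [Bicategory.{w, v} B]
    [Bicategory.Strict B] (M : Marking B)
    (hM : ∀ (a b : B) (f f' : a ⟶ b), f ∈ M.marked a b → (f ≅ f') → f' ∈ M.marked a b)
    (c : B) (γ ρ : Contraction B c) :
    Contraction.IsMContraction M γ ↔ Contraction.IsMContraction M ρ := by
  suffices H : ∀ γ ρ : Contraction B c, Contraction.IsMContraction M γ →
      Contraction.IsMContraction M ρ from ⟨H γ ρ, H ρ γ⟩
  rintro γ ρ ⟨h1, h2⟩
  constructor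
  · intro a
    exact hM a c (γ.obj a) (ρ.obj a) (h1 a)
      ⟨γ.homTo ρ a, ρ.homTo γ a, γ.homTo_comp ρ a, ρ.homTo_comp γ a⟩
  · intro a b f hf
    have hcomp := (ρ.app_comp f (γ.obj b)).symm.trans (ρ.app_naturality (γ.app f))
    haveI := h2 f hf
    haveI : IsIso (eqToHom (show (f ≫ γ.obj b) ≫ ρ.obj c = f ≫ γ.obj b ≫ ρ.obj c by simp) ≫
        Bicategory.whiskerLeft f (ρ.app (γ.obj b)) ≫ ρ.app f) := by
      rw [hcomp]; infer_instance
    have := IsIso.of_isIso_comp_left (eqToHom (show (f ≫ γ.obj b) ≫ ρ.obj c = f ≫ γ.obj b ≫ ρ.obj c by simp)) (Bicategory.whiskerLeft f (ρ.app (γ.obj b)) ≫ ρ.app f)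
    exact IsIso.of_isIso_comp_left (Bicategory.whiskerLeft f (ρ.app (γ.obj b))) (ρ.app f)
end

section
/- Let C be a category and c an object of C. Then c is a terminal object of C if and only if there exists a functor S : C ⥤ Over c such that S composed with the forgetful functor Over c ⥤ C equals the identity functor of C, and S sends c to the object of Over c determined by the identity morphism 𝟙 c. -/
open CategoryTheory CategoryTheory.Limits

universe v u

/-- An object `c` of a category `C` is terminal if and only if the projection
`Over c ⥤ C` admits a (strict) section sending `c` to `𝟙 c`. -/
theorem isTerminal_iff_section_of_over_forget {C : Type u} [Category.{v} C] (c : C) :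
    Nonempty (IsTerminal c) ↔
      ∃ S : C ⥤ Over c, S ⋙ Over.forget c = 𝟭 C ∧ S.obj c = Over.mk (𝟙 c) := by
  constructor
  · rintro ⟨hc⟩
    refine ⟨{ obj := fun x => Over.mk (hc.from x),
              map := fun {x y} f => Over.homMk f (hc.hom_ext _ _) }, rfl, ?_⟩
    show Over.mk (hc.from c) = Over.mk (𝟙 c)
    rw [hc.hom_ext (hc.from c) (𝟙 c)]
  · rintro ⟨S, hS, hc⟩
    have hobj : ∀ x : C, (S.obj x).left = x := fun x => Functor.congr_obj hS x
    have h2 : (S.obj c).hom = eqToHom (hobj c) := by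
      have := Over.w (eqToHom hc)
      simpa using this.symm
    refine ⟨IsTerminal.ofUniqueHom
      (fun x => eqToHom (hobj x).symm ≫ (S.obj x).hom) (fun x f => ?_)⟩
    have hw := Over.w (S.map f)
    have hhom : (S.map f).left = eqToHom (hobj x) ≫ f ≫ eqToHom (hobj c).symm :=
      Functor.congr_hom hS f
    rw [hhom, h2] at hw
    simp at hw
    beta_reduce
    rw [← hw]
    simp
end
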